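/- For every integer m ≥ 1, let a_n = Σ_{k=0}^{⌊n/2⌋} B_m(n−k, k) be the n-th antidiagonal sum of the m-th triangle of the first family. Then for every n ≥ 2m, a_n = a_{n−1} + a_{n−3} + a_{n−5} + ⋯ + a_{n−2m+1} + a_{n−2m}. -/

import Mathlib

/-- The `m`-th Pascal-like triangle of the first family: `B m n 0 = 1`,
`B m n n = 1` if `m ∣ n` and `0` otherwise, and Pascal's recurrence
`B m n k = B m (n-1) k + B m (n-1) (k-1)` for `0 < k < n`.
(Values with `k > n` are set to `0`.) -/
def B (m : ℕ) : ℕ → ℕ → ℕ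
  | _, 0 => 1
  | 0, _ + 1 => 0
  | n + 1, k + 1 =>
      if n + 1 = k + 1 then (if m ∣ (n + 1) then 1 else 0)
      else if n + 1 < k + 1 then 0
      else B m n (k + 1) + B m n k

lemma B_zero (m n : ℕ) : B m n 0 = 1 := by cases n <;> rfl

lemma B_diag (m n : ℕ) : B m n n = if m ∣ n then 1 else 0 := by
  cases n with
  | zero => simp [B]
  | succ n => simp [B]

lemma B_rec (m n k : ℕ) (h : k < n) :
    B m (n + 1) (k + 1) = B m n (k + 1) + B m n k := by
  rw [B]
  rw [if_neg (by omega), if_neg (by omega)]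

def S (m n : ℕ) : ℕ := ∑ k ∈ Finset.range (n / 2 + 1), B m (n - k) k

lemma S_odd (m t : ℕ) (ht : 1 ≤ t) : S m (2*t+1) = S m (2*t) + S m (2*t-1) := by
  have h1 : S m (2*t+1) =
      (∑ k ∈ Finset.range t, (B m (2*t-k-1) (k+1) + B m (2*t-k-1) k)) + 1 := by
    unfold S
    rw [show (2*t+1)/2 + 1 = t+1 by omega, Finset.sum_range_succ']
    rw [show 2*t+1-0 = 2*t+1 by omega, B_zero]
    congr 1
    refine Finset.sum_congr rfl fun k hk => ?_
    simp only [Finset.mem_range] at hk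
    rw [show 2*t+1-(k+1) = (2*t-k-1)+1 by omega, B_rec m _ _ (by omega)]
  have h2 : S m (2*t) = (∑ k ∈ Finset.range t, B m (2*t-k-1) (k+1)) + 1 := by
    unfold S
    rw [show (2*t)/2 + 1 = t+1 by omega, Finset.sum_range_succ']
    rw [show 2*t-0 = 2*t by omega, B_zero]
    rfl
  have h3 : S m (2*t-1) = ∑ k ∈ Finset.range t, B m (2*t-k-1) k := by
    unfold S
    rw [show (2*t-1)/2 + 1 = t by omega]
    refine Finset.sum_congr rfl fun k hk => ?_
    rw [show 2*t-1-k = 2*t-k-1 by omega]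
  rw [h1, h2, h3, Finset.sum_add_distrib]
  ring

lemma S_even (m t : ℕ) (ht : 1 ≤ t) :
    S m (2*t) + (if m ∣ (t-1) then 1 else 0)
      = S m (2*t-1) + S m (2*t-2) + (if m ∣ t then 1 else 0) := by
  have h1 : S m (2*t) =
      (∑ k ∈ Finset.range (t-1), (B m (2*t-k-2) (k+1) + B m (2*t-k-2) k))
        + (if m ∣ t then 1 else 0) + 1 := by
    unfold S
    rw [show (2*t)/2 + 1 = t+1 by omega, Finset.sum_range_succ']
    rw [show 2*t-0 = 2*t by omega, B_zero]
    rw [show Finset.range t = Finset.range ((t-1)+1) by rw [Nat.sub_add_cancel ht],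
      Finset.sum_range_succ]
    rw [show 2*t - ((t-1)+1) = t by omega, show (t-1)+1 = t by omega, B_diag]
    have hsum : ∑ k ∈ Finset.range (t-1), B m (2*t-(k+1)) (k+1)
        = ∑ k ∈ Finset.range (t-1), (B m (2*t-k-2) (k+1) + B m (2*t-k-2) k) := by
      refine Finset.sum_congr rfl fun k hk => ?_
      simp only [Finset.mem_range] at hk
      rw [show 2*t-(k+1) = (2*t-k-2)+1 by omega, B_rec m _ _ (by omega)]
    rw [hsum]
  have h2 : S m (2*t-1) = (∑ k ∈ Finset.range (t-1), B m (2*t-k-2) (k+1)) + 1 := by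
    unfold S
    rw [show (2*t-1)/2 + 1 = (t-1)+1 by omega, Finset.sum_range_succ']
    rw [show 2*t-1-0 = 2*t-1 by omega, B_zero]
    congr 1
    refine Finset.sum_congr rfl fun k hk => ?_
    rw [show 2*t-1-(k+1) = 2*t-k-2 by omega]
  have h3 : S m (2*t-2) =
      (∑ k ∈ Finset.range (t-1), B m (2*t-k-2) k) + (if m ∣ (t-1) then 1 else 0) := by
    unfold S
    rw [show (2*t-2)/2 + 1 = (t-1)+1 by omega, Finset.sum_range_succ]
    rw [show 2*t-2-(t-1) = t-1 by omega, B_diag]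
    congr 1
    refine Finset.sum_congr rfl fun k hk => ?_
    rw [show 2*t-2-k = 2*t-k-2 by omega]
  rw [h1, h2, h3, Finset.sum_add_distrib]
  ring


/-- Antidiagonal sums of the `m`-th triangle satisfy
`a n = a (n-1) + a (n-3) + ⋯ + a (n-2m+1) + a (n-2m)` for `n ≥ 2m`. -/
theorem stmt_6 (m : ℕ) (hm : 1 ≤ m) (a : ℕ → ℕ)
    (ha : ∀ n, a n = ∑ k ∈ Finset.range (n / 2 + 1), B m (n - k) k)
    (n : ℕ) (hn : 2 * m ≤ n) :
    a n = (∑ i ∈ Finset.range m, a (n - (2 * i + 1))) + a (n - 2 * m) := by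
  have haS : ∀ k, a k = S m k := fun k => ha k
  have key : ∀ j, 2*j ≤ n →
      a n + (if n % 2 = 0 ∧ m ∣ (n/2 - j) then 1 else 0)
        = (∑ i ∈ Finset.range j, a (n - (2*i+1))) + a (n - 2*j)
          + (if n % 2 = 0 ∧ m ∣ (n/2) then 1 else 0) := by
    intro j
    induction j with
    | zero => intro _; simp
    | succ j ih =>
      intro hj
      have IH := ih (by omega)
      rw [Finset.sum_range_succ]
      rcases Nat.mod_two_eq_zero_or_one n with hev | hod
      · -- n even
        set t := n/2 - j with ht
        have ht1 : 1 ≤ t := by omega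
        have hSe := S_even m t ht1
        rw [← haS, ← haS, ← haS] at hSe
        have i1 : n - 2*j = 2*t := by omega
        have i2 : n - (2*j+1) = 2*t - 1 := by omega
        have i3 : n - 2*(j+1) = 2*t - 2 := by omega
        have i4 : n/2 - (j+1) = t - 1 := by omega
        rw [i1] at IH
        rw [i2, show n - (2*(j+1)) = 2*t-2 by omega, i4]
        simp only [hev, eq_self_iff_true, true_and] at IH ⊢
        omega
      · -- n odd
        have hodd : n - 2*j = 2 * ((n - 2*j - 1)/2) + 1 := by omega
        set t := (n - 2*j - 1)/2 with ht
        have ht1 : 1 ≤ t := by omega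
        have hSo := S_odd m t ht1
        rw [← haS, ← haS, ← haS] at hSo
        have i1 : n - 2*j = 2*t + 1 := by omega
        have i2 : n - (2*j+1) = 2*t := by omega
        have i3 : n - 2*(j+1) = 2*t - 1 := by omega
        rw [i1] at IH
        rw [i2, show n - (2*(j+1)) = 2*t-1 by omega]
        simp only [hod] at IH ⊢
        simp only [show (1:ℕ) ≠ 0 by omega, false_and, if_false, add_zero] at IH ⊢
        omega
  have hkey := key m hn
  have hcond : (m ∣ (n/2 - m)) ↔ (m ∣ n/2) := by
    have hm2 : m ≤ n/2 := by omega
    constructor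
    · intro hd
      have := Nat.sub_add_cancel hm2
      calc m ∣ (n/2 - m) + m := hd.add dvd_rfl
        _ = n/2 := this
    · intro hd; exact Nat.dvd_sub hd dvd_rfl
  rw [if_congr (and_congr_right fun _ => hcond) rfl rfl] at hkey
  omega
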